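/- Let (X,ν) be a metric measure space with ν locally finite, 0 < m ≤ s, and A ⊆ X compact with ν(B_r(x)) ≥ ϑ r^s for all x ∈ A, r < δ. Then limsup_{N→∞} N · e_{N,∞}(A)^m ≤ 2^m ω_{s-m} ϑ^{-1} · limsup_{r→0⁺} ν(A^r)/(ω_{s-m} r^{s-m}), where A^r = {x : d(x,A) < r} and the limsup on the right is the m-dimensional upper Minkowski content of A relative to ν. -/

import Mathlib

open MeasureTheory Filter Metric Set
open scoped ENNReal NNReal Topology

/-- The `N`-th covering radius of `A`, with centers taken in `A`. -/
noncomputable def covRad {X : Type*} [MetricSpace X] (A : Set X) (N : ℕ) : ℝ≥0∞ :=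
  ⨅ (S : Finset X) (_ : ↑S ⊆ A) (_ : S.Nonempty) (_ : S.card ≤ N),
    ⨆ x ∈ A, ENNReal.ofReal (infDist x (S : Set X))

/-- The constant coinciding with the volume of the unit ball in integer dimension. -/
noncomputable def unitBallVol (t : ℝ) : ℝ := Real.pi ^ (t / 2) / Real.Gamma (1 + t / 2)

section aux

variable {X : Type*} [MetricSpace X]

lemma covRad_le {A : Set X} {N : ℕ} {S : Finset X} (hS : ↑S ⊆ A) (hne : S.Nonempty)
    (hc : S.card ≤ N) : covRad A N ≤ ⨆ x ∈ A, ENNReal.ofReal (infDist x (S : Set X)) :=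
  iInf_le_of_le S (iInf_le_of_le hS (iInf_le_of_le hne (iInf_le _ hc)))

lemma covRad_anti {A : Set X} {M N : ℕ} (h : M ≤ N) : covRad A N ≤ covRad A M :=
  le_iInf fun S => le_iInf fun hS => le_iInf fun hne => le_iInf fun hc =>
    covRad_le hS hne (hc.trans h)

lemma exists_sep_or_cover (A : Set X) (hAne : A.Nonempty) (N : ℕ) (r : ℝ) (hr : 0 < r) :
    covRad A N ≤ ENNReal.ofReal r ∨
    ∃ S : Finset X, ↑S ⊆ A ∧ S.card = N + 1 ∧
      ∀ x ∈ S, ∀ y ∈ S, x ≠ y → r ≤ dist x y := by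
  classical
  set P : ℕ → Prop := fun k => ∃ S : Finset X, ↑S ⊆ A ∧ S.card = k ∧
      ∀ x ∈ S, ∀ y ∈ S, x ≠ y → r ≤ dist x y with hP
  by_cases hPN : P (N + 1)
  · exact Or.inr hPN
  obtain ⟨a, ha⟩ := hAne
  have hP1 : P 1 := by
    refine ⟨{a}, by simpa using ha, by simp, ?_⟩
    intro x hx y hy hxy
    simp only [Finset.mem_singleton] at hx hy
    exact absurd (hx.trans hy.symm) hxy
  have hN1 : 1 ≤ N := by
    rcases Nat.eq_zero_or_pos N with h | h
    · exact absurd (h ▸ hPN) (by simpa [h] using hP1)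
    · exact h
  set M := Nat.findGreatest P N with hM
  have hM1 : 1 ≤ M := Nat.le_findGreatest hN1 hP1
  have hMN : M ≤ N := Nat.findGreatest_le N
  obtain ⟨S, hSA, hScard, hSsep⟩ : P M := Nat.findGreatest_spec hN1 hP1
  have hcover : ∀ x ∈ A, ∃ y ∈ S, dist x y < r := by
    intro x hx
    by_contra hcon
    push_neg at hcon
    have hxS : x ∉ S := fun hxS => absurd hr (not_lt.mpr (by simpa using hcon x hxS))
    have hPM1 : P (M + 1) := by
      refine ⟨insert x S, ?_, by rw [Finset.card_insert_of_notMem hxS, hScard], ?_⟩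
      · intro z hz
        rcases Finset.mem_insert.mp (by exact_mod_cast hz) with h | h
        · exact h ▸ hx
        · exact hSA h
      · intro u hu v hv huv
        rcases Finset.mem_insert.mp hu with hu | hu <;>
          rcases Finset.mem_insert.mp hv with hv | hv
        · exact absurd (hu.trans hv.symm) huv
        · exact hu ▸ hcon v hv
        · exact dist_comm u v ▸ (hv ▸ hcon u hu)
        · exact hSsep u hu v hv huv
    rcases Nat.lt_or_ge M N with hlt | hge
    · exact absurd (Nat.le_findGreatest hlt hPM1) (by omega)
    · exact hPN (by have : M = N := le_antisymm hMN hge; rwa [this] at hPM1)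
  have hSne : S.Nonempty := Finset.card_pos.mp (by omega)
  refine Or.inl ((covRad_le hSA hSne (hScard ▸ hMN)).trans ?_)
  refine iSup₂_le fun x hx => ?_
  obtain ⟨y, hy, hxy⟩ := hcover x hx
  exact ENNReal.ofReal_le_ofReal ((infDist_le_dist_of_mem (by exact_mod_cast hy)).trans hxy.le)

lemma packing_bound [MeasurableSpace X] [BorelSpace X] (ν : Measure X) (A : Set X)
    {S : Finset X} (hSA : ↑S ⊆ A) {t : ℝ} {c : ℝ≥0∞}
    (hsep : ∀ x ∈ S, ∀ y ∈ S, x ≠ y → 2 * t ≤ dist x y)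
    (hvol : ∀ x ∈ A, c ≤ ν (ball x t)) :
    (S.card : ℝ≥0∞) * c ≤ ν (thickening t A) := by
  have hdisj : (↑S : Set X).PairwiseDisjoint fun x => ball x t := by
    intro x hx y hy hxy
    exact ball_disjoint_ball (by linarith [hsep x hx y hy hxy])
  have hmeas : ∀ x ∈ S, MeasurableSet (ball x t) := fun x _ => measurableSet_ball
  calc (S.card : ℝ≥0∞) * c = ∑ _x ∈ S, c := by rw [Finset.sum_const, nsmul_eq_mul]
    _ ≤ ∑ x ∈ S, ν (ball x t) := Finset.sum_le_sum fun x hx => hvol x (hSA hx)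
    _ = ν (⋃ x ∈ S, ball x t) := (measure_biUnion_finset hdisj hmeas).symm
    _ ≤ ν (thickening t A) := by
        refine measure_mono (iUnion₂_subset fun x hx => ?_)
        exact ball_subset_thickening (hSA hx) t

lemma covRad_lt_top {A : Set X} (hA : IsCompact A) {a : X} (ha : a ∈ A) {N : ℕ} (hN : 1 ≤ N) :
    covRad A N < ⊤ := by
  obtain ⟨C, hC⟩ := hA.isBounded.subset_closedBall a
  refine lt_of_le_of_lt (covRad_le (S := {a}) (by simpa using ha) (by simp)
    (by simpa using hN)) ?_
  refine lt_of_le_of_lt (le_trans (iSup₂_le fun x hx => ?_) le_rfl)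
    (ENNReal.ofReal_lt_top : ENNReal.ofReal C < ⊤)
  exact ENNReal.ofReal_le_ofReal (by simpa [dist_comm] using hC hx)

lemma covRad_tendsto_zero {A : Set X} (hA : IsCompact A) (hAne : A.Nonempty) :
    Tendsto (fun N => covRad A N) atTop (𝓝 0) := by
  rw [ENNReal.tendsto_atTop_zero]
  intro ε hε
  obtain ⟨r, hr0, hrε⟩ : ∃ r : ℝ, 0 < r ∧ ENNReal.ofReal r ≤ ε := by
    rcases eq_or_ne ε ⊤ with h | h
    · exact ⟨1, one_pos, by simp [h]⟩
    · have hε' : 0 < ε.toReal := ENNReal.toReal_pos hε.ne' h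
      exact ⟨ε.toReal / 2, by linarith,
        ENNReal.ofReal_le_of_le_toReal (by linarith)⟩
  obtain ⟨t, htA, htfin, hcov⟩ := finite_approx_of_totallyBounded hA.totallyBounded r hr0
  have htne : t.Nonempty := by
    rcases Set.eq_empty_or_nonempty t with h | h
    · obtain ⟨a, ha⟩ := hAne
      exact absurd (hcov ha) (by simp [h])
    · exact h
  classical
  refine ⟨htfin.toFinset.card, fun n hn => ?_⟩
  have h1 : covRad A n ≤ ⨆ x ∈ A, ENNReal.ofReal (infDist x (htfin.toFinset : Set X)) := by
    refine covRad_le (by simpa using htA) ?_ hn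
    exact (htfin.toFinset_nonempty).mpr htne
  refine (h1.trans (iSup₂_le fun x hx => ?_)).trans hrε
  obtain ⟨y, hy, hxy⟩ := Set.mem_iUnion₂.mp (hcov hx)
  refine ENNReal.ofReal_le_ofReal ((infDist_le_dist_of_mem ?_).trans (le_of_lt hxy))
  simpa using hy

end aux

lemma unitBallVol_pos {t : ℝ} (ht : 0 ≤ t) : 0 < unitBallVol t := by
  unfold unitBallVol
  exact div_pos (Real.rpow_pos_of_pos Real.pi_pos _) (Real.Gamma_pos_of_pos (by linarith))

lemma keyN {X : Type*} [MetricSpace X] [MeasurableSpace X] [BorelSpace X]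
    (ν : Measure X) (A : Set X) (hAne : A.Nonempty)
    (m s ϑ δ : ℝ) (hm : 0 < m) (hms : m ≤ s) (hϑ : 0 < ϑ) (hδ : 0 < δ)
    (hconc : ∀ x ∈ A, ∀ r : ℝ, 0 < r → r < δ →
      ENNReal.ofReal (ϑ * r ^ s) ≤ ν (ball x r)) (N : ℕ)
    (h0 : covRad A N ≠ 0) (htop : covRad A N ≠ ⊤)
    (hρδ : (covRad A N).toReal / 2 < δ) :
    (N : ℝ≥0∞) * covRad A N ^ m ≤
      ENNReal.ofReal (2 ^ m * unitBallVol (s - m) * ϑ⁻¹) *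
        (ν (thickening ((covRad A N).toReal / 2) A) /
          ENNReal.ofReal (unitBallVol (s - m) * ((covRad A N).toReal / 2) ^ (s - m))) := by
  have hω : 0 < unitBallVol (s - m) := unitBallVol_pos (by linarith)
  set e := (covRad A N).toReal with he
  have he0 : 0 < e := ENNReal.toReal_pos h0 htop
  set ρ := e / 2 with hρdef
  have hρ0 : 0 < ρ := by positivity
  have hρδ' : ρ < δ := hρδ
  -- Step 1: packing bound for all r < e
  have step1 : ∀ r ∈ Ioo (0:ℝ) e,
      ((N : ℝ≥0∞) + 1) * ENNReal.ofReal (ϑ * (r/2) ^ s) ≤ ν (thickening ρ A) := by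
    intro r hr
    rcases exists_sep_or_cover A hAne N r hr.1 with h | ⟨S, hSA, hcard, hsep⟩
    · exact absurd h (not_le.mpr
        ((ENNReal.ofReal_lt_iff_lt_toReal hr.1.le htop).mpr hr.2))
    · have ht0 : 0 < r / 2 := by linarith [hr.1]
      have htδ : r / 2 < δ := by
        have := hr.2; simp only [hρdef] at hρδ'; linarith
      have hvol : ∀ x ∈ A, ENNReal.ofReal (ϑ * (r/2) ^ s) ≤ ν (ball x (r/2)) :=
        fun x hx => hconc x hx (r/2) ht0 htδ
      have hpack := packing_bound ν A hSA (t := r/2)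
        (by intro x hx y hy hxy; have := hsep x hx y hy hxy; linarith) hvol
      rw [hcard] at hpack
      calc ((N : ℝ≥0∞) + 1) * ENNReal.ofReal (ϑ * (r/2) ^ s)
          = ((N + 1 : ℕ) : ℝ≥0∞) * ENNReal.ofReal (ϑ * (r/2) ^ s) := by push_cast; ring
        _ ≤ ν (thickening (r/2) A) := hpack
        _ ≤ ν (thickening ρ A) := measure_mono (thickening_mono (by linarith [hr.2]) A)
  -- Step 2: take the limit r → e⁻
  have cont : Tendsto (fun r : ℝ => ((N : ℝ≥0∞) + 1) * ENNReal.ofReal (ϑ * (r/2) ^ s))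
      (𝓝[<] e) (𝓝 (((N : ℝ≥0∞) + 1) * ENNReal.ofReal (ϑ * ρ ^ s))) := by
    have h1 : ContinuousAt (fun r : ℝ => (r/2) ^ s) e := by
      have h2 := Real.continuousAt_rpow_const (e/2) s (Or.inl (ne_of_gt hρ0))
      have hdiv : ContinuousAt (fun r : ℝ => r / 2) e := continuousAt_id.div_const 2
      exact ContinuousAt.comp (x := e) h2 hdiv
    have hc : ContinuousAt (fun r : ℝ => ϑ * (r/2) ^ s) e := continuousAt_const.mul h1
    have h3 : ContinuousAt (fun r : ℝ => ENNReal.ofReal (ϑ * (r/2) ^ s)) e :=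
      ENNReal.continuous_ofReal.continuousAt.comp hc
    exact ENNReal.Tendsto.const_mul (h3.tendsto.mono_left nhdsWithin_le_nhds)
      (Or.inr (by simp))
  have step2 : ((N : ℝ≥0∞) + 1) * ENNReal.ofReal (ϑ * ρ ^ s) ≤ ν (thickening ρ A) := by
    refine le_of_tendsto cont ?_
    filter_upwards [Ioo_mem_nhdsLT_of_mem (show e ∈ Ioc (0:ℝ) e from ⟨he0, le_rfl⟩)]
      with r hr using step1 r hr
  -- Step 3: algebra
  have hb : 0 < ϑ * ρ ^ s := by positivity
  have hcov : covRad A N = ENNReal.ofReal e := (ENNReal.ofReal_toReal htop).symm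
  have key3 : (N : ℝ≥0∞) * covRad A N ^ m ≤
      ν (thickening ρ A) * ENNReal.ofReal (e ^ m / (ϑ * ρ ^ s)) := by
    rw [hcov, ENNReal.ofReal_rpow_of_pos he0]
    calc (N : ℝ≥0∞) * ENNReal.ofReal (e ^ m)
        = (N : ℝ≥0∞) * (ENNReal.ofReal (ϑ * ρ ^ s) * ENNReal.ofReal (e ^ m / (ϑ * ρ ^ s))) := by
          rw [← ENNReal.ofReal_mul hb.le, mul_div_cancel₀ _ (ne_of_gt hb)]
      _ ≤ (((N : ℝ≥0∞) + 1) * ENNReal.ofReal (ϑ * ρ ^ s)) * ENNReal.ofReal (e ^ m / (ϑ * ρ ^ s)) := by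
          rw [← mul_assoc]; gcongr; exact le_self_add
      _ ≤ ν (thickening ρ A) * ENNReal.ofReal (e ^ m / (ϑ * ρ ^ s)) := by gcongr
  have hrpow_s : (0:ℝ) < ρ ^ s := Real.rpow_pos_of_pos hρ0 s
  have hrpow_m : (0:ℝ) < ρ ^ m := Real.rpow_pos_of_pos hρ0 m
  have hreal : e ^ m / (ϑ * ρ ^ s) =
      (2 ^ m * unitBallVol (s - m) * ϑ⁻¹) / (unitBallVol (s - m) * ρ ^ (s - m)) := by
    have h2 : e = 2 * ρ := by rw [hρdef]; ring
    have hem : e ^ m = 2 ^ m * ρ ^ m := by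
      rw [h2, Real.mul_rpow (by norm_num) hρ0.le]
    rw [hem, Real.rpow_sub hρ0]
    field_simp
  have hsplit : ENNReal.ofReal (e ^ m / (ϑ * ρ ^ s)) =
      ENNReal.ofReal (2 ^ m * unitBallVol (s - m) * ϑ⁻¹) /
        ENNReal.ofReal (unitBallVol (s - m) * ρ ^ (s - m)) := by
    rw [hreal, ENNReal.ofReal_div_of_pos (by positivity)]
  refine key3.trans (le_of_eq ?_)
  rw [hsplit]
  simp only [div_eq_mul_inv]
  ring

/-- Minkowski-content upper bound for covering radii of dimension m ≤ s. -/
theorem stmt_13 {X : Type*} [MetricSpace X] [MeasurableSpace X] [BorelSpace X]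
    (ν : Measure X) [IsLocallyFiniteMeasure ν]
    (A : Set X) (hA : IsCompact A) (hAne : A.Nonempty)
    (m s ϑ δ : ℝ) (hm : 0 < m) (hms : m ≤ s) (hϑ : 0 < ϑ) (hδ : 0 < δ)
    (hconc : ∀ x ∈ A, ∀ r : ℝ, 0 < r → r < δ →
      ENNReal.ofReal (ϑ * r ^ s) ≤ ν (ball x r)) :
    limsup (fun N : ℕ => (N : ℝ≥0∞) * covRad A N ^ m) atTop ≤
      ENNReal.ofReal (2 ^ m * unitBallVol (s - m) * ϑ⁻¹) *
        limsup (fun r : ℝ =>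
          ν (thickening r A) / ENNReal.ofReal (unitBallVol (s - m) * r ^ (s - m)))
          (𝓝[>] (0 : ℝ)) := by
  classical
  set C := ENNReal.ofReal (2 ^ m * unitBallVol (s - m) * ϑ⁻¹) with hC
  set f : ℝ → ℝ≥0∞ := fun r =>
    ν (thickening r A) / ENNReal.ofReal (unitBallVol (s - m) * r ^ (s - m)) with hf
  by_cases hz : ∃ N0, covRad A N0 = 0
  · obtain ⟨N0, hN0⟩ := hz
    have hev : ∀ᶠ N : ℕ in atTop, (N : ℝ≥0∞) * covRad A N ^ m = (0 : ℝ≥0∞) := by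
      filter_upwards [eventually_ge_atTop N0] with N hN
      have h0 : covRad A N = 0 := le_antisymm (hN0 ▸ covRad_anti hN) zero_le
      rw [h0, ENNReal.zero_rpow_of_pos hm, mul_zero]
    calc limsup (fun N : ℕ => (N : ℝ≥0∞) * covRad A N ^ m) atTop
        = limsup (fun _ : ℕ => (0 : ℝ≥0∞)) atTop := limsup_congr hev
      _ = 0 := limsup_const _
      _ ≤ _ := zero_le
  push_neg at hz
  obtain ⟨a, ha⟩ := hAne
  have htop : ∀ N, 1 ≤ N → covRad A N ≠ ⊤ := fun N hN => (covRad_lt_top hA ha hN).ne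
  set ρ : ℕ → ℝ := fun N => (covRad A N).toReal / 2 with hρ
  have htend0 : Tendsto (fun N => (covRad A N).toReal) atTop (𝓝 0) := by
    have h := covRad_tendsto_zero hA ⟨a, ha⟩
    have h2 := (ENNReal.tendsto_toReal (by simp : (0:ℝ≥0∞) ≠ ⊤)).comp h
    simpa [Function.comp_def] using h2
  have htendρ0 : Tendsto ρ atTop (𝓝 0) := by simpa using htend0.div_const 2
  have htendρ : Tendsto ρ atTop (𝓝[>] (0:ℝ)) := by
    rw [tendsto_nhdsWithin_iff]
    refine ⟨htendρ0, ?_⟩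
    filter_upwards [eventually_ge_atTop 1] with N hN
    exact mem_Ioi.mpr (div_pos (ENNReal.toReal_pos (hz N) (htop N hN)) two_pos)
  have hevδ : ∀ᶠ N in atTop, ρ N < δ := htendρ0.eventually (eventually_lt_nhds hδ)
  have key : ∀ᶠ N : ℕ in atTop, (N : ℝ≥0∞) * covRad A N ^ m ≤ C * f (ρ N) := by
    filter_upwards [eventually_ge_atTop 1, hevδ] with N hN hNδ
    exact keyN ν A ⟨a, ha⟩ m s ϑ δ hm hms hϑ hδ hconc N (hz N) (htop N hN) hNδ
  calc limsup (fun N : ℕ => (N : ℝ≥0∞) * covRad A N ^ m) atTop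
      ≤ limsup (fun N => C * f (ρ N)) atTop := limsup_le_limsup key
    _ = C * limsup (fun N => f (ρ N)) atTop :=
        ENNReal.limsup_const_mul_of_ne_top ENNReal.ofReal_ne_top
    _ ≤ C * limsup f (𝓝[>] (0:ℝ)) := by
        refine mul_le_mul_right ?_ C
        have h1 : limsup (fun N => f (ρ N)) atTop = limsup f (map ρ atTop) := by
          rw [limsup, limsup, map_map]; rfl
        rw [h1]
        exact limsup_le_limsup_of_le htendρ
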